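/- arXiv:1908.10112 — 5 statements merged into one kernel-verified Lean document; each statement's English description precedes it below -/
import Mathlib

section
/- (Explicit expression of the potential function.) Let b > 0, α ∈ ℝ, and let f ∈ C²([0,∞);ℝ) satisfy −f''(t) + (t+α)²f(t) = (1/b)(1 − f(t)²)f(t) for all t ≥ 0. Assume that t·f(t) → 0 and f'(t) → 0 as t → ∞, that t ↦ (t+α)f(t)² is integrable on (0,∞), and the optimality condition ∫₀^∞ (t+α)f(t)² dt = 0. Then for every t ≥ 0: F(t) = −f'(t)² + (t+α)²f(t)² − (1/b)f(t)² + (1/(2b))f(t)⁴, where F(t) := 2∫₀^t (η+α)f(η)² dη. -/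
open MeasureTheory Real Set Filter
open scoped Topology

noncomputable section

/-- **Explicit expression of the potential function.**  For a `C²` solution of the 1D
GL equation on the half-line with the stated decay and the optimality condition,
`F(t) = −f′(t)² + (t+α)² f(t)² − (1/b) f(t)² + (1/(2b)) f(t)⁴`. -/
theorem potential_function_explicit
    (b α : ℝ) (hb : 0 < b)
    (f : ℝ → ℝ) (hf : ContDiff ℝ 2 f)
    (hode : ∀ t : ℝ, 0 ≤ t →
      -deriv (deriv f) t + (t + α) ^ 2 * f t = 1 / b * (1 - (f t) ^ 2) * f t)
    (hlim1 : Tendsto (fun t => t * f t) atTop (𝓝 0))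
    (hlim2 : Tendsto (deriv f) atTop (𝓝 0))
    (hint : IntegrableOn (fun t => (t + α) * (f t) ^ 2) (Ioi 0))
    (hopt : (∫ t in Ioi (0 : ℝ), (t + α) * (f t) ^ 2) = 0) :
    ∀ t : ℝ, 0 ≤ t →
      2 * (∫ η in Ioo (0 : ℝ) t, (η + α) * (f η) ^ 2) =
        -(deriv f t) ^ 2 + (t + α) ^ 2 * (f t) ^ 2 - 1 / b * (f t) ^ 2 +
          1 / (2 * b) * (f t) ^ 4 := by
  intro t ht
  set g : ℝ → ℝ := fun η => (η + α) * (f η) ^ 2 with hg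
  set G : ℝ → ℝ := fun s => -(deriv f s) ^ 2 + (s + α) ^ 2 * (f s) ^ 2 - 1 / b * (f s) ^ 2 +
      1 / (2 * b) * (f s) ^ 4 with hGdef
  set Φ : ℝ → ℝ := fun s => 2 * (∫ η in (0:ℝ)..s, g η) - G s with hΦdef
  have hfc : Continuous f := hf.continuous
  have hfd : Differentiable ℝ f := hf.differentiable (by norm_num)
  have hf'cd : ContDiff ℝ 1 (deriv f) := (contDiff_succ_iff_deriv.mp (show ContDiff ℝ (1 + 1 : ℕ) f from by exact_mod_cast hf)).2.2
  have hf'd : Differentiable ℝ (deriv f) := hf'cd.differentiable (by norm_num)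
  have hf'c : Continuous (deriv f) := hf'd.continuous
  have hgc : Continuous g := by
    apply Continuous.mul
    · exact continuous_id.add continuous_const
    · exact hfc.pow 2
  -- derivative of the primitive
  have hIderiv : ∀ s : ℝ, HasDerivAt (fun u => ∫ η in (0:ℝ)..u, g η) (g s) s := by
    intro s
    exact intervalIntegral.integral_hasDerivAt_right
      (hgc.intervalIntegrable 0 s)
      (hgc.aestronglyMeasurable.stronglyMeasurableAtFilter)
      hgc.continuousAt
  -- derivative of G
  have hGderiv : ∀ s : ℝ, HasDerivAt G
      (-(2 * deriv f s ^ 1 * deriv (deriv f) s)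
        + ((2 * (s + α) ^ 1 * 1) * (f s) ^ 2 + (s + α) ^ 2 * (2 * f s ^ 1 * deriv f s))
        - 1 / b * (2 * f s ^ 1 * deriv f s)
        + 1 / (2 * b) * (4 * f s ^ 3 * deriv f s)) s := by
    intro s
    have hfs : HasDerivAt f (deriv f s) s := (hfd s).hasDerivAt
    have hf's : HasDerivAt (deriv f) (deriv (deriv f) s) s := (hf'd s).hasDerivAt
    have hid : HasDerivAt (fun u : ℝ => u + α) 1 s := (hasDerivAt_id s).add_const α
    exact ((((hf's.pow 2).neg.add ((hid.pow 2).mul (hfs.pow 2))).sub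
      ((hfs.pow 2).const_mul (1 / b))).add ((hfs.pow 4).const_mul (1 / (2 * b))))
  -- Φ has derivative 0 on [0, ∞)
  have hΦderiv : ∀ s : ℝ, 0 ≤ s → HasDerivAt Φ 0 s := by
    intro s hs
    have h := ((hIderiv s).const_mul 2).sub (hGderiv s)
    convert h using 1
    · rfl
    · rfl
    · rfl
    have hode' := hode s hs
    simp only [hg]
    linear_combination (2 * deriv f s) * hode'
  -- Φ is constant on [0, ∞)
  have hΦcont : Continuous Φ := by
    apply Continuous.sub
    · exact continuous_const.mul (intervalIntegral.continuous_primitive (fun a b => hgc.intervalIntegrable a b) 0)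
    · exact (((hf'c.pow 2).neg.add (((continuous_id.add continuous_const).pow 2).mul
        (hfc.pow 2))).sub (continuous_const.mul (hfc.pow 2))).add
        (continuous_const.mul (hfc.pow 4))
  have hkey : ∀ x : ℝ, 0 ≤ x → Φ x = Φ 0 := by
    intro x hx
    exact constant_of_has_deriv_right_zero (hΦcont.continuousOn)
      (fun y hy => (hΦderiv y hy.1).hasDerivWithinAt) x ⟨hx, le_rfl⟩
  -- limits
  have hf0 : Tendsto f atTop (𝓝 0) := by
    have h : Tendsto (fun x : ℝ => (x * f x) * x⁻¹) atTop (𝓝 (0 * 0)) :=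
      hlim1.mul tendsto_inv_atTop_zero
    rw [mul_zero] at h
    apply h.congr'
    filter_upwards [eventually_gt_atTop (0:ℝ)] with x hx
    field_simp
  have htf : Tendsto (fun x : ℝ => (x + α) * f x) atTop (𝓝 0) := by
    have h := hlim1.add (hf0.const_mul α)
    have h2 : Tendsto (fun x : ℝ => (x + α) * f x) atTop (𝓝 (0 + α * 0)) :=
      h.congr (fun x => by ring)
    simpa using h2
  have hG0 : Tendsto G atTop (𝓝 0) := by
    have h : Tendsto (fun x : ℝ => -(deriv f x) ^ 2 + ((x + α) * f x) ^ 2 - 1 / b * (f x) ^ 2 +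
        1 / (2 * b) * (f x) ^ 4) atTop
        (𝓝 (-(0:ℝ) ^ 2 + (0:ℝ) ^ 2 - 1 / b * (0:ℝ) ^ 2 + 1 / (2 * b) * (0:ℝ) ^ 4)) := by
      exact (((hlim2.pow 2).neg.add (htf.pow 2)).sub ((hf0.pow 2).const_mul (1 / b))).add
        ((hf0.pow 4).const_mul (1 / (2 * b)))
    norm_num at h
    apply h.congr
    intro x
    simp only [hGdef]
    ring
  have hF0 : Tendsto (fun x : ℝ => ∫ η in (0:ℝ)..x, g η) atTop (𝓝 0) := by
    have h := intervalIntegral_tendsto_integral_Ioi 0 hint tendsto_id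
    rw [hopt] at h
    exact h
  have hΦ0 : Tendsto Φ atTop (𝓝 0) := by
    have h := (hF0.const_mul 2).sub hG0
    norm_num at h
    exact h
  have hconst : Tendsto Φ atTop (𝓝 (Φ 0)) := by
    apply Tendsto.congr' _ (tendsto_const_nhds (x := Φ 0))
    filter_upwards [eventually_ge_atTop (0:ℝ)] with x hx
    exact (hkey x hx).symm
  have hΦ00 : Φ 0 = 0 := tendsto_nhds_unique hconst hΦ0
  have hΦt : Φ t = 0 := by rw [hkey t ht, hΦ00]
  have hIoo : (∫ η in Ioo (0:ℝ) t, g η) = ∫ η in (0:ℝ)..t, g η := by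
    rw [intervalIntegral.integral_of_le ht, integral_Ioc_eq_integral_Ioo]
  simp only [hΦdef, sub_eq_zero] at hΦt
  rw [hg] at hIoo
  rw [hIoo, hΦt]
end
end

section
/- (Positivity of the cost function on the half-line.) Let b ≥ 1, α ∈ ℝ, and let f ∈ C²([0,∞);ℝ) satisfy −f''(t) + (t+α)²f(t) = (1/b)(1 − f(t)²)f(t) for all t ≥ 0. Assume that f(t) → 0 as t → ∞, that t ↦ (t+α)f(t)² is integrable on (0,∞), and that ∫₀^∞ (t+α)f(t)² dt = 0. Then the cost function K(t) := f(t)² + 2∫₀^t (η+α)f(η)² dη satisfies K(t) ≥ 0 for every t ≥ 0. -/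
open MeasureTheory Real Set Filter
open scoped Topology

noncomputable section

/-- The cost function `K(t) = f(t)² + 2∫₀ᵗ (η+α) f(η)² dη`. -/
def costK (α : ℝ) (f : ℝ → ℝ) (t : ℝ) : ℝ :=
  (f t) ^ 2 + 2 * ∫ η in Ioo (0 : ℝ) t, (η + α) * (f η) ^ 2

/-- **Positivity of the cost function on the half-line.**  For `b ≥ 1` and a `C²`
solution of the 1D GL equation on `[0,∞)` vanishing at infinity and satisfying the
optimality condition, the cost function is nonnegative. -/
theorem cost_function_nonneg
    (b α : ℝ) (hb : 1 ≤ b)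
    (f : ℝ → ℝ) (hf : ContDiff ℝ 2 f)
    (hode : ∀ t : ℝ, 0 ≤ t →
      -deriv (deriv f) t + (t + α) ^ 2 * f t = 1 / b * (1 - (f t) ^ 2) * f t)
    (hlim : Tendsto f atTop (𝓝 0))
    (hint : IntegrableOn (fun t => (t + α) * (f t) ^ 2) (Ioi 0))
    (hopt : (∫ t in Ioi (0 : ℝ), (t + α) * (f t) ^ 2) = 0) :
    ∀ t : ℝ, 0 ≤ t → 0 ≤ costK α f t := by
  have hb0 : (0:ℝ) < b := lt_of_lt_of_le one_pos hb
  set g : ℝ → ℝ := fun t => (t + α) * f t ^ 2 with hg_def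
  have hfc : Continuous f := hf.continuous
  have hgc : Continuous g := by
    exact (continuous_id.add continuous_const).mul (hfc.pow 2)
  have hfd : Differentiable ℝ f := hf.differentiable (by norm_num)
  have hf2 : ContDiff ℝ ((1:ℕ) + 1) f := by exact_mod_cast hf
  have hf' : ContDiff ℝ 1 (deriv f) := (contDiff_succ_iff_deriv.mp hf2).2.2
  have hfd' : Differentiable ℝ (deriv f) := hf'.differentiable (by norm_num)
  set K : ℝ → ℝ := fun t => f t ^ 2 + 2 * ∫ x in (0:ℝ)..t, g x with hK_def
  set D : ℝ → ℝ := fun t => 2 * f t * deriv f t + 2 * g t with hD_def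
  -- derivative of K is D
  have hKderiv : ∀ t, HasDerivAt K (D t) t := by
    intro t
    have h1 : HasDerivAt (fun t => f t ^ 2) (2 * f t * deriv f t) t := by
      have := ((hfd t).hasDerivAt).pow 2
      exact this.congr_deriv (by norm_num)
    have h2 : HasDerivAt (fun u => ∫ x in (0:ℝ)..u, g x) (g t) t :=
      intervalIntegral.integral_hasDerivAt_right (hgc.intervalIntegrable 0 t)
        (hgc.stronglyMeasurableAtFilter _ _) hgc.continuousAt
    exact h1.add (h2.const_mul 2)
  -- derivative of D
  set E : ℝ → ℝ := fun t =>
    2 * (deriv f t * deriv f t + f t * deriv (deriv f) t)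
      + 2 * (1 * f t ^ 2 + (t + α) * (2 * f t * deriv f t)) with hE_def
  have hDderiv : ∀ t, HasDerivAt D (E t) t := by
    intro t
    have h1 : HasDerivAt f (deriv f t) t := (hfd t).hasDerivAt
    have h2 : HasDerivAt (deriv f) (deriv (deriv f) t) t := (hfd' t).hasDerivAt
    have hmul : HasDerivAt (fun t => f t * deriv f t)
        (deriv f t * deriv f t + f t * deriv (deriv f) t) t := h1.mul h2
    have hlin : HasDerivAt (fun t : ℝ => t + α) 1 t := (hasDerivAt_id t).add_const α
    have hsq : HasDerivAt (fun t => f t ^ 2) (2 * f t * deriv f t) t := by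
      have := h1.pow 2
      exact this.congr_deriv (by norm_num)
    have hg' : HasDerivAt g (1 * f t ^ 2 + (t + α) * (2 * f t * deriv f t)) t :=
      hlin.mul hsq
    have h := (hmul.const_mul 2).add (hg'.const_mul 2)
    have hD : D = fun y => 2 * (f y * deriv f y) + 2 * g y := by
      funext y; simp only [hD_def]; ring
    rw [hD]
    exact h.congr_deriv (show _ = E t by simp only [hE_def])
  -- E is nonnegative on [0, ∞)
  have hEnonneg : ∀ t : ℝ, 0 ≤ t → 0 ≤ E t := by
    intro t ht
    have hdd : deriv (deriv f) t = (t + α) ^ 2 * f t - 1 / b * (1 - f t ^ 2) * f t := by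
      have := hode t ht
      linarith
    have hc1 : 1 / b ≤ 1 := by
      rw [div_le_one hb0]; exact hb
    have hc0 : 0 < 1 / b := by positivity
    have key1 : 0 ≤ (1 - 1 / b) * f t ^ 2 :=
      mul_nonneg (by linarith) (sq_nonneg _)
    have key2 : 0 ≤ 1 / b * (f t ^ 2) ^ 2 :=
      mul_nonneg hc0.le (sq_nonneg _)
    have key3 : 0 ≤ (deriv f t + (t + α) * f t) ^ 2 := sq_nonneg _
    simp only [hE_def]
    have hexp : 2 * (deriv f t * deriv f t + f t * deriv (deriv f) t)
        + 2 * (1 * f t ^ 2 + (t + α) * (2 * f t * deriv f t))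
        = 2 * (deriv f t + (t + α) * f t) ^ 2 + 2 * ((1 - 1 / b) * f t ^ 2)
          + 2 * (1 / b * (f t ^ 2) ^ 2) := by
      rw [hdd]; ring
    rw [hexp]
    linarith [key1, key2, key3]
  -- D is monotone on [0,∞)
  have hDcont : Continuous D := by
    exact ((continuous_const.mul hfc).mul hf'.continuous).add (continuous_const.mul hgc)
  have hDmono : MonotoneOn D (Ici (0:ℝ)) := by
    apply monotoneOn_of_deriv_nonneg (convex_Ici 0) hDcont.continuousOn
    · intro x _
      exact (hDderiv x).differentiableAt.differentiableWithinAt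
    · intro x hx
      rw [interior_Ici] at hx
      rw [(hDderiv x).deriv]
      exact hEnonneg x (le_of_lt hx)
  -- K tends to 0 at infinity
  have hIlim : Tendsto (fun t => ∫ x in (0:ℝ)..t, g x) atTop (𝓝 0) := by
    have := MeasureTheory.intervalIntegral_tendsto_integral_Ioi (0:ℝ) hint tendsto_id
    rw [hopt] at this
    exact this
  have hKlim : Tendsto K atTop (𝓝 0) := by
    have h1 : Tendsto (fun t => f t ^ 2) atTop (𝓝 0) := by
      have := hlim.pow 2
      simpa using this
    have h2 : Tendsto (fun t => 2 * ∫ x in (0:ℝ)..t, g x) atTop (𝓝 0) := by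
      have := hIlim.const_mul (2:ℝ)
      simpa using this
    have := h1.add h2
    simpa [hK_def] using this
  -- D is nonpositive on [0,∞)
  have hDnonpos : ∀ s : ℝ, 0 ≤ s → D s ≤ 0 := by
    intro s hs
    by_contra hpos
    push_neg at hpos
    -- then K grows at least linearly
    have hKgrow : ∀ t : ℝ, s < t → K s + D s * (t - s) ≤ K t := by
      intro t hst
      obtain ⟨ξ, hξ, hslope⟩ := exists_hasDerivAt_eq_slope K D hst
        (fun x _ => (hKderiv x).continuousAt.continuousWithinAt)
        (fun x _ => hKderiv x)
      have hDs : D s ≤ D ξ :=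
        hDmono (mem_Ici.mpr hs) (mem_Ici.mpr (le_trans hs (le_of_lt hξ.1)))
          (le_of_lt hξ.1)
      have : D s * (t - s) ≤ D ξ * (t - s) :=
        mul_le_mul_of_nonneg_right hDs (by linarith)
      rw [hslope] at this
      have htne : t - s ≠ 0 := by linarith
      field_simp at this
      rw [mul_div_cancel_left₀ _ htne] at this
      linarith
    have hgrow : Tendsto (fun t => K s + D s * (t - s)) atTop atTop := by
      apply tendsto_atTop_add_const_left
      exact (tendsto_atTop_add_const_right atTop (-s) tendsto_id).const_mul_atTop hpos
    have hKtop : Tendsto K atTop atTop := by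
      apply tendsto_atTop_mono' atTop ?_ hgrow
      filter_upwards [eventually_gt_atTop s] with t ht
      exact hKgrow t ht
    exact (not_tendsto_atTop_of_tendsto_nhds hKlim) hKtop
  -- K is antitone on [0,∞)
  have hKanti : AntitoneOn K (Ici (0:ℝ)) := by
    apply antitoneOn_of_deriv_nonpos (convex_Ici 0)
      (fun x _ => (hKderiv x).continuousAt.continuousWithinAt)
    · intro x _
      exact (hKderiv x).differentiableAt.differentiableWithinAt
    · intro x hx
      rw [interior_Ici] at hx
      rw [(hKderiv x).deriv]
      exact hDnonpos x (le_of_lt hx)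
  -- conclusion
  intro t ht
  have hcost : costK α f t = K t := by
    simp only [costK, hK_def, hg_def]
    rw [intervalIntegral.integral_of_le ht, MeasureTheory.integral_Ioc_eq_integral_Ioo]
  rw [hcost]
  have hev : ∀ᶠ s in atTop, K s ≤ K t := by
    filter_upwards [eventually_ge_atTop t] with s hs
    exact hKanti (mem_Ici.mpr ht) (mem_Ici.mpr (le_trans ht hs)) hs
  exact le_of_tendsto hKlim hev
end
end

section
/- (Interior critical point of the finite-interval cost function.) Let b > 0, α ∈ ℝ, ℓ > 0, and let f ∈ C²([0,ℓ];ℝ) be strictly positive on [0,ℓ], satisfy −f''(t) + (t+α)²f(t) = (1/b)(1 − f(t)²)f(t) on [0,ℓ], the Neumann conditions f'(0) = f'(ℓ) = 0, and the optimality condition ∫₀^ℓ (t+α)f(t)² dt = 0. Let K(t) := f(t)² + 2∫₀^t (η+α)f(η)² dη. Then: (i) −ℓ < α < 0; (ii) there exists t_m ∈ (0,ℓ) with K'(t_m) = 0; and (iii) at every t_c ∈ (0,ℓ) with K'(t_c) = 0 one has K(t_c) = (1 − 1/b + f(t_c)²/(2b))·f(t_c)² − ((ℓ+α)² − 1/b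 + f(ℓ)²/(2b))·f(ℓ)². -/
open MeasureTheory Real Set Filter
open scoped Topology

noncomputable section

/-- **Interior critical point of the finite-interval cost function.** -/
theorem cost_function_interior_critical_point
    (b α ℓ : ℝ) (hb : 0 < b) (hℓ : 0 < ℓ)
    (f : ℝ → ℝ) (hf : ContDiff ℝ 2 f)
    (hpos : ∀ t ∈ Icc (0 : ℝ) ℓ, 0 < f t)
    (hode : ∀ t ∈ Icc (0 : ℝ) ℓ,
      -deriv (deriv f) t + (t + α) ^ 2 * f t = 1 / b * (1 - (f t) ^ 2) * f t)
    (hN0 : deriv f 0 = 0) (hNℓ : deriv f ℓ = 0)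
    (hopt : (∫ t in Ioo (0 : ℝ) ℓ, (t + α) * (f t) ^ 2) = 0) :
    (-ℓ < α ∧ α < 0) ∧
    (∃ tm ∈ Ioo (0 : ℝ) ℓ, deriv (costK α f) tm = 0) ∧
    (∀ tc ∈ Ioo (0 : ℝ) ℓ, deriv (costK α f) tc = 0 →
      costK α f tc =
        (1 - 1 / b + (f tc) ^ 2 / (2 * b)) * (f tc) ^ 2 -
          ((ℓ + α) ^ 2 - 1 / b + (f ℓ) ^ 2 / (2 * b)) * (f ℓ) ^ 2) := by
  have hfc : Continuous f := hf.continuous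
  have hdf : Differentiable ℝ f := hf.differentiable (by norm_num)
  have hf1 : ContDiff ℝ 1 (deriv f) :=
    ((contDiff_succ_iff_deriv (n := 1)).mp (by exact_mod_cast hf)).2.2
  have hdf' : Differentiable ℝ (deriv f) := hf1.differentiable (by norm_num)
  have hfc' : Continuous (deriv f) := hf1.continuous
  set g : ℝ → ℝ := fun η => (η + α) * f η ^ 2 with hg_def
  have hgc : Continuous g := by continuity
  -- FTC derivative of the interval integral
  have hFi : ∀ t : ℝ, HasDerivAt (fun s => ∫ x in (0:ℝ)..s, g x) (g t) t := fun t =>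
    intervalIntegral.integral_hasDerivAt_right (hgc.intervalIntegrable 0 t)
      (hgc.stronglyMeasurableAtFilter _ _) hgc.continuousAt
  -- equality of Ioo integral and interval integral for s > 0
  have hIoo : ∀ s : ℝ, 0 < s → (∫ η in Ioo (0:ℝ) s, g η) = ∫ x in (0:ℝ)..s, g x := by
    intro s hs
    rw [intervalIntegral.integral_of_le hs.le, MeasureTheory.integral_Ioc_eq_integral_Ioo]
  -- Part (i)
  have hoptI : (∫ x in (0:ℝ)..ℓ, g x) = 0 := by rw [← hIoo ℓ hℓ]; exact hopt
  have hα0 : α < 0 := by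
    by_contra h
    push_neg at h
    have : 0 < ∫ x in (0:ℝ)..ℓ, g x := by
      apply intervalIntegral.intervalIntegral_pos_of_pos_on (hgc.intervalIntegrable 0 ℓ) _ hℓ
      intro x hx
      have hfx := hpos x ⟨hx.1.le, hx.2.le⟩
      have : 0 < x + α := by linarith [hx.1]
      positivity
    linarith [hoptI]
  have hαℓ : -ℓ < α := by
    by_contra h
    push_neg at h
    have : 0 < ∫ x in (0:ℝ)..ℓ, -g x := by
      apply intervalIntegral.intervalIntegral_pos_of_pos_on
        ((hgc.neg).intervalIntegrable 0 ℓ) _ hℓ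
      intro x hx
      have hfx := hpos x ⟨hx.1.le, hx.2.le⟩
      have hxa : x + α < 0 := by linarith [hx.2]
      have h2 := mul_pos (neg_pos.mpr hxa) (pow_pos hfx 2)
      simp only [hg_def, Pi.neg_apply]
      nlinarith [h2]
    rw [intervalIntegral.integral_neg, hoptI] at this
    linarith
  -- the derivative of K on (0,∞)
  set G : ℝ → ℝ := fun t => 2 * f t * deriv f t + 2 * (t + α) * f t ^ 2 with hG_def
  have hKalt : ∀ t : ℝ, HasDerivAt (fun s => f s ^ 2 + 2 * ∫ x in (0:ℝ)..s, g x) (G t) t := by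
    intro t
    have h1 : HasDerivAt (fun s => f s ^ 2) (2 * f t * deriv f t) t := by
      have := ((hdf t).hasDerivAt).fun_pow 2
      simpa [mul_comm, mul_assoc, mul_left_comm] using this
    have h2 := (hFi t).const_mul 2
    have := h1.fun_add h2
    refine this.congr_deriv ?_
    simp [hG_def, hg_def]; ring
  have hKeq : ∀ t : ℝ, 0 < t → deriv (costK α f) t = G t := by
    intro t ht
    have hev : costK α f =ᶠ[𝓝 t] fun s => f s ^ 2 + 2 * ∫ x in (0:ℝ)..s, g x := by
      filter_upwards [isOpen_Ioi.mem_nhds (show t ∈ Ioi (0:ℝ) from ht)] with s hs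
      exact congrArg (fun I => f s ^ 2 + 2 * I) (hIoo s hs)
    rw [hev.deriv_eq, (hKalt t).deriv]
  -- Part (ii)
  have hGc : Continuous G := by
    apply Continuous.add
    · exact (continuous_const.mul hfc).mul hfc'
    · exact (continuous_const.mul (continuous_id.add continuous_const)).mul (hfc.pow 2)
  have hG0 : G 0 < 0 := by
    have hf0 := hpos 0 ⟨le_rfl, hℓ.le⟩
    simp only [hG_def, hN0, zero_add]
    nlinarith [mul_neg_of_neg_of_pos hα0 (pow_pos hf0 2)]
  have hGℓ : 0 < G ℓ := by
    have hfℓ := hpos ℓ ⟨hℓ.le, le_rfl⟩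
    simp only [hG_def, hNℓ]
    nlinarith [mul_pos (show (0:ℝ) < ℓ + α by linarith) (pow_pos hfℓ 2)]
  have hIVT := intermediate_value_Ioo hℓ.le hGc.continuousOn
  obtain ⟨tm, htm, htm0⟩ := hIVT ⟨hG0, hGℓ⟩
  refine ⟨⟨hαℓ, hα0⟩, ⟨tm, htm, by rw [hKeq tm htm.1]; exact htm0⟩, ?_⟩
  -- Part (iii): energy identity
  intro tc htc hcrit
  set E : ℝ → ℝ := fun t => (deriv f t) ^ 2 - (t + α) ^ 2 * f t ^ 2
    + 1 / b * (f t ^ 2 - f t ^ 4 / 2) with hE_def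
  set W : ℝ → ℝ := fun t => E t + 2 * ∫ x in (0:ℝ)..t, g x with hW_def
  have hE' : ∀ t : ℝ, HasDerivAt E
      (2 * deriv f t * deriv (deriv f) t
        - (2 * (t + α) * f t ^ 2 + (t + α) ^ 2 * (2 * f t * deriv f t))
        + 1 / b * (2 * f t * deriv f t - 4 * f t ^ 3 * deriv f t / 2)) t := by
    intro t
    have h1 : HasDerivAt (fun s => (deriv f s) ^ 2) (2 * deriv f t * deriv (deriv f) t) t := by
      simpa [mul_comm, mul_assoc, mul_left_comm] using ((hdf' t).hasDerivAt).fun_pow 2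
    have h2 : HasDerivAt (fun s => (s + α) ^ 2 * f s ^ 2)
        (2 * (t + α) * f t ^ 2 + (t + α) ^ 2 * (2 * f t * deriv f t)) t := by
      have ha : HasDerivAt (fun s : ℝ => (s + α) ^ 2) (2 * (t + α)) t := by
        simpa using (((hasDerivAt_id t).add_const α).fun_pow 2)
      have hb2 : HasDerivAt (fun s => f s ^ 2) (2 * f t * deriv f t) t := by
        simpa [mul_comm, mul_assoc, mul_left_comm] using ((hdf t).hasDerivAt).fun_pow 2
      simpa using ha.fun_mul hb2
    have h3 : HasDerivAt (fun s => 1 / b * (f s ^ 2 - f s ^ 4 / 2))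
        (1 / b * (2 * f t * deriv f t - 4 * f t ^ 3 * deriv f t / 2)) t := by
      have hb2 : HasDerivAt (fun s => f s ^ 2) (2 * f t * deriv f t) t := by
        simpa [mul_comm, mul_assoc, mul_left_comm] using ((hdf t).hasDerivAt).fun_pow 2
      have hb4 : HasDerivAt (fun s => f s ^ 4) (4 * f t ^ 3 * deriv f t) t := by
        simpa [mul_comm, mul_assoc, mul_left_comm] using ((hdf t).hasDerivAt).fun_pow 4
      exact ((hb2.sub (hb4.div_const 2)).const_mul (1 / b))
    exact (h1.sub h2).add h3
  have hW' : ∀ t ∈ Icc (0:ℝ) ℓ, HasDerivAt W 0 t := by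
    intro t ht
    have hdd : deriv (deriv f) t = (t + α) ^ 2 * f t - 1 / b * (1 - f t ^ 2) * f t := by
      have := hode t ht; linarith
    have := (hE' t).fun_add ((hFi t).const_mul 2)
    refine this.congr_deriv ?_
    rw [hdd]
    simp only [hg_def]
    field_simp
    ring
  have hWc : Continuous W := by
    rw [continuous_iff_continuousAt]
    intro t
    exact ((hE' t).add ((hFi t).const_mul 2)).continuousAt
  have hWconst : ∀ x ∈ Icc (0:ℝ) ℓ, W x = W 0 :=
    constant_of_has_deriv_right_zero (hWc.continuousOn)
      (fun x hx => ((hW' x ⟨hx.1, hx.2.le⟩).hasDerivWithinAt))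
  have hWtc : W tc = W ℓ := by
    rw [hWconst tc ⟨htc.1.le, htc.2.le⟩, hWconst ℓ ⟨hℓ.le, le_rfl⟩]
  -- critical point relation
  have hGtc : G tc = 0 := by rw [← hKeq tc htc.1]; exact hcrit
  have hftc : 0 < f tc := hpos tc ⟨htc.1.le, htc.2.le⟩
  have hdftc : deriv f tc = -(tc + α) * f tc := by
    have h : f tc * (2 * deriv f tc + 2 * (tc + α) * f tc) = 0 := by
      have := hGtc; simp only [hG_def] at this; nlinarith [this]
    rcases mul_eq_zero.mp h with h1 | h2
    · exact absurd h1 hftc.ne'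
    · linarith
  -- assemble
  have hKtc : costK α f tc = f tc ^ 2 + (W tc - E tc) := by
    rw [show costK α f tc = f tc ^ 2 + 2 * ∫ x in (0:ℝ)..tc, g x from congrArg (fun I => f tc ^ 2 + 2 * I) (hIoo tc htc.1)]; simp only [hW_def]; ring
  have hEℓ : E ℓ = -(ℓ + α) ^ 2 * f ℓ ^ 2 + 1 / b * (f ℓ ^ 2 - f ℓ ^ 4 / 2) := by
    simp only [hE_def, hNℓ]; ring
  have hWℓ : W ℓ = E ℓ := by simp only [hW_def, hoptI]; ring
  have hEtc : E tc = 1 / b * (f tc ^ 2 - f tc ^ 4 / 2) := by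
    simp only [hE_def, hdftc]; ring
  rw [hKtc, hWtc, hWℓ, hEℓ, hEtc]
  field_simp
  ring
end
end

section
/- (Integral bound on the derivative of the 1D profile.) Let b > 0, α ∈ ℝ, ℓ > 0, and let f ∈ C²([0,ℓ];ℝ) satisfy 0 ≤ f ≤ 1 on [0,ℓ], the end condition f'(ℓ) = 0, and the ODE −f''(t) + (t+α)²f(t) = (1/b)(1 − f(t)²)f(t) on [0,ℓ]. Then for every t ∈ [0,ℓ]: |f'(t)| ≤ ∫_t^ℓ ((η+α)² + 1/b)·f(η) dη. Consequently, if moreover f(η) ≤ M·e^{−(η+α)²/2} on [0,ℓ] for some M > 0, then there exists a constant C (depending only on b, α, M and not on ℓ) such that |f'(t)| ≤ C·e^{−t²/4} for all t ∈ [0,ℓ]. -/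
open MeasureTheory Real Set Filter
open scoped Topology

noncomputable section

private lemma key_pointwise_GL (b α M : ℝ) (hb : 0 < b) (hM : 0 < M) (t η : ℝ)
    (ht : 0 ≤ t) (htη : t ≤ η) :
    ((η + α) ^ 2 + 1 / b) * (M * Real.exp (-(η + α) ^ 2 / 2)) ≤
      (M * Real.exp (α ^ 2 / 2) * (8 + 2 * α ^ 2 + 1 / b)) *
        (Real.exp (-t ^ 2 / 4) * Real.exp (-(η - t) ^ 2 / 4)) := by
  set u : ℝ := η / 2 + α with hu
  have hsplit : Real.exp (-(η + α) ^ 2 / 2)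
      = Real.exp (-u ^ 2) * (Real.exp (α ^ 2 / 2) * Real.exp (-η ^ 2 / 4)) := by
    rw [← Real.exp_add, ← Real.exp_add]; congr 1; rw [hu]; ring
  have hkey : ((η + α) ^ 2 + 1 / b) * Real.exp (-u ^ 2) ≤ 8 + 2 * α ^ 2 + 1 / b := by
    have hform : (η + α) = 2 * u - α := by rw [hu]; ring
    rw [hform]
    clear_value u
    have h2 : u ^ 2 * Real.exp (-u ^ 2) ≤ 1 := by
      have h1 : Real.exp (u ^ 2) * Real.exp (-u ^ 2) = 1 := by rw [← Real.exp_add]; simp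
      nlinarith [mul_le_mul_of_nonneg_right (Real.add_one_le_exp (u ^ 2)) (Real.exp_pos (-u ^ 2)).le,
        (Real.exp_pos (-u ^ 2)).le]
    have he1 : Real.exp (-u ^ 2) ≤ 1 :=
      Real.exp_le_one_iff.mpr (by positivity |> neg_nonpos_of_nonneg)
    have he0 : (0:ℝ) ≤ Real.exp (-u ^ 2) := (Real.exp_pos _).le
    have hb' : (0:ℝ) ≤ 1 / b := by positivity
    nlinarith [mul_nonneg (sq_nonneg (2 * u + α)) he0,
      mul_le_mul_of_nonneg_left he1 (sq_nonneg α),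
      mul_le_mul_of_nonneg_left he1 hb']
  have hgauss : Real.exp (-η ^ 2 / 4) ≤ Real.exp (-t ^ 2 / 4) * Real.exp (-(η - t) ^ 2 / 4) := by
    rw [← Real.exp_add]
    apply Real.exp_le_exp.mpr
    nlinarith [mul_nonneg ht (sub_nonneg.mpr htη)]
  calc ((η + α) ^ 2 + 1 / b) * (M * Real.exp (-(η + α) ^ 2 / 2))
      = M * Real.exp (α ^ 2 / 2) * (((η + α) ^ 2 + 1 / b) * Real.exp (-u ^ 2))
          * Real.exp (-η ^ 2 / 4) := by rw [hsplit]; ring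
    _ ≤ M * Real.exp (α ^ 2 / 2) * (8 + 2 * α ^ 2 + 1 / b) * Real.exp (-η ^ 2 / 4) := by
        apply mul_le_mul_of_nonneg_right _ (Real.exp_pos _).le
        exact mul_le_mul_of_nonneg_left hkey (by positivity)
    _ ≤ _ := mul_le_mul_of_nonneg_left hgauss (by positivity)

private lemma gauss_shift_integrable (t : ℝ) :
    Integrable (fun x : ℝ => Real.exp (-(x - t) ^ 2 / 4)) := by
  have h : (fun x : ℝ => Real.exp (-(x - t) ^ 2 / 4))
      = (fun x : ℝ => Real.exp (-(1/4 : ℝ) * x ^ 2)) ∘ (fun x => x - t) := by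
    funext x; simp only [Function.comp_apply]; ring_nf
  rw [h]
  exact (integrable_exp_neg_mul_sq (by norm_num : (0:ℝ) < 1/4)).comp_sub_right t

private lemma gauss_shift_integral (t : ℝ) :
    ∫ x : ℝ, Real.exp (-(x - t) ^ 2 / 4) = Real.sqrt (π / (1/4)) := by
  have h : (fun x : ℝ => Real.exp (-(x - t) ^ 2 / 4))
      = (fun x : ℝ => Real.exp (-(1/4 : ℝ) * x ^ 2)) ∘ (fun x => x - t) := by
    funext x; simp only [Function.comp_apply]; ring_nf
  calc ∫ x : ℝ, Real.exp (-(x - t) ^ 2 / 4)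
      = ∫ x : ℝ, Real.exp (-(1/4 : ℝ) * x ^ 2) := by
        rw [h]
        exact integral_sub_right_eq_self (μ := volume)
          (fun x : ℝ => Real.exp (-(1/4 : ℝ) * x ^ 2)) t
    _ = Real.sqrt (π / (1/4)) := integral_gaussian (1/4)

/-- **Integral bound on the derivative of the 1D profile.**  For a `C²` solution of
the 1D GL equation on `[0,ℓ]` with `0 ≤ f ≤ 1` and `f′(ℓ) = 0`,
`|f′(t)| ≤ ∫_t^ℓ ((η+α)² + 1/b) f(η) dη`; moreover, under a Gaussian bound on `f`,
`|f′(t)| ≤ C e^{−t²/4}` with `C` depending only on `b`, `α`, `M` (not on `ℓ`). -/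
theorem oneD_profile_derivative_bound
    (b α M : ℝ) (hb : 0 < b) (hM : 0 < M) :
    (∀ ℓ : ℝ, 0 < ℓ → ∀ f : ℝ → ℝ, ContDiff ℝ 2 f →
      (∀ t ∈ Icc (0 : ℝ) ℓ, 0 ≤ f t ∧ f t ≤ 1) →
      deriv f ℓ = 0 →
      (∀ t ∈ Icc (0 : ℝ) ℓ,
        -deriv (deriv f) t + (t + α) ^ 2 * f t = 1 / b * (1 - (f t) ^ 2) * f t) →
      ∀ t ∈ Icc (0 : ℝ) ℓ,
        |deriv f t| ≤ ∫ η in Ioo t ℓ, ((η + α) ^ 2 + 1 / b) * f η) ∧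
    ∃ C > (0 : ℝ), ∀ ℓ : ℝ, 0 < ℓ → ∀ f : ℝ → ℝ, ContDiff ℝ 2 f →
      (∀ t ∈ Icc (0 : ℝ) ℓ, 0 ≤ f t ∧ f t ≤ 1) →
      deriv f ℓ = 0 →
      (∀ t ∈ Icc (0 : ℝ) ℓ,
        -deriv (deriv f) t + (t + α) ^ 2 * f t = 1 / b * (1 - (f t) ^ 2) * f t) →
      (∀ η ∈ Icc (0 : ℝ) ℓ, f η ≤ M * Real.exp (-(η + α) ^ 2 / 2)) →
      ∀ t ∈ Icc (0 : ℝ) ℓ, |deriv f t| ≤ C * Real.exp (-t ^ 2 / 4) := by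
  have part1 : ∀ ℓ : ℝ, 0 < ℓ → ∀ f : ℝ → ℝ, ContDiff ℝ 2 f →
      (∀ t ∈ Icc (0 : ℝ) ℓ, 0 ≤ f t ∧ f t ≤ 1) →
      deriv f ℓ = 0 →
      (∀ t ∈ Icc (0 : ℝ) ℓ,
        -deriv (deriv f) t + (t + α) ^ 2 * f t = 1 / b * (1 - (f t) ^ 2) * f t) →
      ∀ t ∈ Icc (0 : ℝ) ℓ,
        |deriv f t| ≤ ∫ η in Ioo t ℓ, ((η + α) ^ 2 + 1 / b) * f η := by
    intro ℓ hℓ f hf hf01 hfl hode t ht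
    obtain ⟨ht0, htℓ⟩ := ht
    have hf1 : ContDiff ℝ 1 (deriv f) := by
      have h2 : ContDiff ℝ (1 + 1) f := by norm_num; exact hf
      exact (contDiff_succ_iff_deriv.mp h2).2.2
    have hd1 : Differentiable ℝ (deriv f) := hf1.differentiable one_ne_zero
    have hd2cont : Continuous (deriv (deriv f)) := hf1.continuous_deriv le_rfl
    have hFTC : ∫ η in t..ℓ, deriv (deriv f) η = deriv f ℓ - deriv f t :=
      intervalIntegral.integral_deriv_eq_sub (fun x _ => hd1 x)
        (hd2cont.intervalIntegrable t ℓ)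
    have hval : deriv f t = -(∫ η in t..ℓ, deriv (deriv f) η) := by
      rw [hFTC, hfl]; ring
    have hcont : Continuous (fun η : ℝ => ((η + α) ^ 2 + 1 / b) * f η) :=
      Continuous.mul (((continuous_id.add continuous_const).pow 2).add continuous_const) hf.continuous
    have hpt : ∀ η ∈ Icc t ℓ, |deriv (deriv f) η| ≤ ((η + α) ^ 2 + 1 / b) * f η := by
      intro η hη
      have hη0 : η ∈ Icc (0 : ℝ) ℓ := ⟨le_trans ht0 hη.1, hη.2⟩
      obtain ⟨h0f, hf1'⟩ := hf01 η hη0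
      have hode' := hode η hη0
      have hb' : (0:ℝ) < 1 / b := by positivity
      rw [abs_le]
      constructor
      · nlinarith [mul_nonneg (sq_nonneg (η + α)) h0f, mul_nonneg hb'.le (pow_nonneg h0f 3)]
      · nlinarith [mul_nonneg (sq_nonneg (η + α)) h0f,
          mul_nonneg (mul_nonneg hb'.le h0f) (by nlinarith : (0:ℝ) ≤ 2 - f η ^ 2)]
    calc |deriv f t| = |∫ η in t..ℓ, deriv (deriv f) η| := by rw [hval, abs_neg]
      _ ≤ ∫ η in t..ℓ, |deriv (deriv f) η| :=
          intervalIntegral.abs_integral_le_integral_abs htℓ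
      _ ≤ ∫ η in t..ℓ, ((η + α) ^ 2 + 1 / b) * f η :=
          intervalIntegral.integral_mono_on htℓ
            (hd2cont.abs.intervalIntegrable t ℓ) (hcont.intervalIntegrable t ℓ) hpt
      _ = ∫ η in Ioo t ℓ, ((η + α) ^ 2 + 1 / b) * f η := by
          rw [intervalIntegral.integral_of_le htℓ, integral_Ioc_eq_integral_Ioo]
  refine ⟨part1, ?_⟩
  set Cb : ℝ := M * Real.exp (α ^ 2 / 2) * (8 + 2 * α ^ 2 + 1 / b) with hCb
  have hCbpos : 0 < Cb := by rw [hCb]; positivity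
  refine ⟨Cb * Real.sqrt (π / (1/4)), by positivity, ?_⟩
  intro ℓ hℓ f hf hf01 hfl hode hfgauss t ht
  obtain ⟨ht0, htℓ⟩ := ht
  have hbase := part1 ℓ hℓ f hf hf01 hfl hode t ⟨ht0, htℓ⟩
  set g : ℝ → ℝ := fun x => Cb * (Real.exp (-t ^ 2 / 4) * Real.exp (-(x - t) ^ 2 / 4)) with hg
  have hgint : Integrable g :=
    ((gauss_shift_integrable t).const_mul (Real.exp (-t ^ 2 / 4))).const_mul Cb
  have hcont : Continuous (fun η : ℝ => ((η + α) ^ 2 + 1 / b) * f η) :=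
    Continuous.mul (((continuous_id.add continuous_const).pow 2).add continuous_const) hf.continuous
  have hint1 : IntegrableOn (fun η : ℝ => ((η + α) ^ 2 + 1 / b) * f η) (Ioo t ℓ) :=
    (hcont.integrableOn_Icc (a := t) (b := ℓ)).mono_set Ioo_subset_Icc_self
  have hstep1 : (∫ η in Ioo t ℓ, ((η + α) ^ 2 + 1 / b) * f η) ≤ ∫ η in Ioo t ℓ, g η := by
    apply setIntegral_mono_on hint1 hgint.integrableOn measurableSet_Ioo
    intro η hη
    have hη0 : η ∈ Icc (0 : ℝ) ℓ := ⟨le_trans ht0 hη.1.le, hη.2.le⟩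
    have h1 : ((η + α) ^ 2 + 1 / b) * f η
        ≤ ((η + α) ^ 2 + 1 / b) * (M * Real.exp (-(η + α) ^ 2 / 2)) :=
      mul_le_mul_of_nonneg_left (hfgauss η hη0) (by positivity)
    exact h1.trans (key_pointwise_GL b α M hb hM t η ht0 hη.1.le)
  have hstep2 : (∫ η in Ioo t ℓ, g η) ≤ ∫ η : ℝ, g η :=
    setIntegral_le_integral hgint (ae_of_all _ fun x => by rw [hg]; positivity)
  have hstep3 : (∫ η : ℝ, g η) = Cb * Real.sqrt (π / (1/4)) * Real.exp (-t ^ 2 / 4) := by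
    rw [hg]
    rw [integral_const_mul, integral_const_mul, gauss_shift_integral t]
    ring
  calc |deriv f t| ≤ ∫ η in Ioo t ℓ, ((η + α) ^ 2 + 1 / b) * f η := hbase
    _ ≤ ∫ η : ℝ, g η := hstep1.trans hstep2
    _ = Cb * Real.sqrt (π / (1/4)) * Real.exp (-t ^ 2 / 4) := hstep3
end
end

section
/- (Gaussian decay of the 1D profile.) Let b ≥ 1, α ∈ ℝ, and let f ∈ C²([0,∞);ℝ) satisfy 0 ≤ f ≤ 1 on [0,∞), f(t) → 0 as t → ∞, and the ODE −f''(t) + (t+α)²f(t) = (1/b)(1 − f(t)²)f(t) for all t ≥ 0. Then there exists a constant C > 0 such that f(t) ≤ C·e^{−(t+α)²/2} for every t ≥ 0. -/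
open MeasureTheory Real Set Filter
open scoped Topology

noncomputable section

/-- Second derivative test direction: at a local max of a `C²` function the second
derivative is nonpositive. -/
lemma secondDeriv_nonpos_of_isLocalMax' {w : ℝ → ℝ} (hw : ContDiff ℝ 2 w) {t₀ : ℝ}
    (hmax : IsLocalMax w t₀) : deriv (deriv w) t₀ ≤ 0 := by
  by_contra hpos
  push_neg at hpos
  have hw2 : ContDiff ℝ 1 (deriv w) := by
    have : ContDiff ℝ (1 + 1) w := by norm_num; exact hw
    exact (contDiff_succ_iff_deriv.mp this).2.2
  have hder : HasDerivAt (deriv w) (deriv (deriv w) t₀) t₀ :=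
    ((hw2.differentiable (by norm_num)) t₀).hasDerivAt
  have hz : deriv w t₀ = 0 := hmax.deriv_eq_zero
  -- slope of deriv w tends to positive value, so deriv w > 0 just right of t₀
  have hslope : Tendsto (slope (deriv w) t₀) (𝓝[>] t₀) (𝓝 (deriv (deriv w) t₀)) :=
    (hasDerivAt_iff_tendsto_slope.mp hder).mono_left (nhdsWithin_mono _ (by
      intro x hx; exact ne_of_gt hx))
  have hev : ∀ᶠ s in 𝓝[>] t₀, 0 < deriv w s := by
    filter_upwards [hslope.eventually_const_lt (by linarith : (0:ℝ) < deriv (deriv w) t₀),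
      self_mem_nhdsWithin] with s hs hs'
    have : 0 < (deriv w s - deriv w t₀) / (s - t₀) := by
      simpa [slope_def_field, div_eq_iff] using hs
    rw [hz, sub_zero] at this
    have h1 : 0 < s - t₀ := by simpa [sub_pos] using (hs' : t₀ < s)
    have h2 : 0 < deriv w s / (s - t₀) * (s - t₀) := mul_pos this h1
    rwa [div_mul_cancel₀ _ h1.ne'] at h2
  -- get an interval (t₀, t₀+δ) where deriv w > 0
  obtain ⟨u, hu, hI⟩ := (nhdsGT_basis t₀).eventually_iff.mp hev
  -- w is strictly monotone on [t₀, u]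
  have hcont : Continuous w := hw.continuous
  have hmono : StrictMonoOn w (Icc t₀ u) := by
    apply strictMonoOn_of_deriv_pos (convex_Icc _ _) hcont.continuousOn
    intro x hx
    rw [interior_Icc] at hx
    exact hI hx
  -- contradiction with local max
  obtain ⟨ε, hε, hball⟩ := Metric.eventually_nhds_iff_ball.mp hmax
  set s := min u (t₀ + ε/2) with hs
  have hst : t₀ < s := lt_min hu (by linarith)
  have h1 : w t₀ < w s := hmono ⟨le_rfl, hu.le⟩ ⟨hst.le, min_le_left _ _⟩ hst
  have h2 : w s ≤ w t₀ := hball s (by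
    rw [Real.ball_eq_Ioo]
    constructor
    · linarith
    · have := min_le_right u (t₀ + ε/2); simp only [hs]; linarith)
  linarith

/-- **Gaussian decay of the 1D profile.**  For `b ≥ 1` and a `C²` solution of the 1D
GL equation on `[0,∞)` with `0 ≤ f ≤ 1` vanishing at infinity,
`f(t) ≤ C e^{−(t+α)²/2}`. -/
theorem oneD_profile_gaussian_decay
    (b α : ℝ) (hb : 1 ≤ b)
    (f : ℝ → ℝ) (hf : ContDiff ℝ 2 f)
    (hrange : ∀ t : ℝ, 0 ≤ t → 0 ≤ f t ∧ f t ≤ 1)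
    (hlim : Tendsto f atTop (𝓝 0))
    (hode : ∀ t : ℝ, 0 ≤ t →
      -deriv (deriv f) t + (t + α) ^ 2 * f t = 1 / b * (1 - (f t) ^ 2) * f t) :
    ∃ C > (0 : ℝ), ∀ t : ℝ, 0 ≤ t → f t ≤ C * Real.exp (-(t + α) ^ 2 / 2) := by
  set E : ℝ → ℝ := fun t => Real.exp (-(t + α) ^ 2 / 2) with hE_def
  -- derivatives of the Gaussian
  have hEdiff : ∀ t : ℝ, HasDerivAt E (-(t + α) * E t) t := by
    intro t
    have h1 : HasDerivAt (fun t : ℝ => -(t + α) ^ 2 / 2) (-(t + α)) t := by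
      have : HasDerivAt (fun t : ℝ => t + α) 1 t := (hasDerivAt_id t).add_const α
      simpa [neg_div] using ((this.pow 2).div_const 2).fun_neg
    have := h1.exp
    simp only [hE_def]
    convert this using 1
    ring
  have hEd : deriv E = fun t => -(t + α) * E t := funext fun t => (hEdiff t).deriv
  have hEdd : ∀ t : ℝ, HasDerivAt (deriv E) (((t + α) ^ 2 - 1) * E t) t := by
    intro t
    rw [hEd]
    have h1 : HasDerivAt (fun t : ℝ => -(t + α)) (-1) t :=
      (((hasDerivAt_id t).add_const α)).neg
    have := h1.fun_mul (hEdiff t)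
    exact this.congr_deriv (by ring)
  have hEcont : ContDiff ℝ 2 E := by
    apply ContDiff.exp
    exact (((contDiff_id.add contDiff_const).pow 2).neg).div_const 2
  have hEpos : ∀ t, 0 < E t := fun t => Real.exp_pos _
  -- constants
  set T : ℝ := max 0 (1 - α) with hT_def
  have hT0 : 0 ≤ T := le_max_left _ _
  set C : ℝ := Real.exp (max (α ^ 2) 1 / 2) with hC_def
  have hCpos : 0 < C := Real.exp_pos _
  refine ⟨C, hCpos, ?_⟩
  -- On [0, T] the bound holds trivially
  have hK1 : ∀ t : ℝ, 0 ≤ t → t ≤ T → f t ≤ C * E t := by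
    intro t ht htT
    have hsq : (t + α) ^ 2 ≤ max (α ^ 2) 1 := by
      have hub : t + α ≤ max α 1 := by
        rcases le_total α 1 with h | h
        · have hT' : T = 1 - α := max_eq_right (by linarith)
          have : t ≤ 1 - α := hT' ▸ htT
          have := le_max_right α 1
          linarith
        · have hT' : T = 0 := max_eq_left (by linarith)
          have ht0 : t = 0 := le_antisymm (hT' ▸ htT) ht
          have := le_max_left α 1
          linarith
      have hlb : α ≤ t + α := by linarith
      rcases le_total 0 (t + α) with h0 | h0
      · rcases le_total α 1 with h | h
        · have h1 : t + α ≤ 1 := hub.trans_eq (max_eq_right h)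
          have := le_max_right (α ^ 2) 1
          nlinarith
        · have h1 : t + α ≤ α := hub.trans_eq (max_eq_left h)
          have := le_max_left (α ^ 2) 1
          nlinarith
      · have := le_max_left (α ^ 2) 1
        nlinarith
    have hge1 : 1 ≤ C * E t := by
      rw [hC_def, hE_def, ← Real.exp_add]
      rw [show max (α^2) 1 / 2 + -(t+α)^2/2 = (max (α^2) 1 - (t+α)^2)/2 by ring]
      have : 0 ≤ (max (α^2) 1 - (t+α)^2)/2 := by linarith
      calc (1:ℝ) = Real.exp 0 := (Real.exp_zero).symm
        _ ≤ _ := Real.exp_le_exp.mpr this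
    exact le_trans (hrange t ht).2 hge1
  -- the comparison function w
  set w : ℝ → ℝ := fun t => f t - C * E t with hw_def
  have hwcont2 : ContDiff ℝ 2 w := hf.sub (hEcont.const_smul C)
  have hwT : ∀ t : ℝ, 0 ≤ t → t ≤ T → w t ≤ 0 := fun t ht htT => by
    simpa [hw_def] using sub_nonpos.mpr (hK1 t ht htT)
  -- derivatives of w
  have hfd : Differentiable ℝ f := hf.differentiable (by norm_num)
  have hfd2 : Differentiable ℝ (deriv f) := by
    have h2 : ContDiff ℝ (1 + 1) f := by norm_num; exact hf
    exact ((contDiff_succ_iff_deriv.mp h2).2.2).differentiable (by norm_num)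
  have hwd : deriv w = fun t => deriv f t - C * (-(t + α) * E t) := by
    funext t
    rw [hw_def]
    rw [deriv_fun_sub (hfd t) ((hEdiff t).const_mul C).differentiableAt]
    rw [deriv_const_mul _ (hEdiff t).differentiableAt, (hEdiff t).deriv]
  have hwdd : ∀ t : ℝ, deriv (deriv w) t
      = deriv (deriv f) t - C * (((t + α) ^ 2 - 1) * E t) := by
    intro t
    rw [hwd]
    have hg : (fun t => deriv f t - C * (-(t + α) * E t))
        = fun t => deriv f t - C * deriv E t := by
      funext s; rw [hEd]
    rw [hg, deriv_fun_sub (hfd2 t) ((hEdd t).const_mul C).differentiableAt,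
      deriv_const_mul _ (hEdd t).differentiableAt, (hEdd t).deriv]
  -- limit of w at infinity
  have hwlim : Tendsto w atTop (𝓝 0) := by
    have hElim : Tendsto E atTop (𝓝 0) := by
      rw [hE_def]
      apply Real.tendsto_exp_atBot.comp
      apply Tendsto.atBot_div_const (by norm_num : (0:ℝ) < 2)
      apply tendsto_neg_atBot_iff.mpr
      exact (tendsto_pow_atTop (by norm_num : 2 ≠ 0)).comp
        (tendsto_atTop_add_const_right _ α tendsto_id)
    have : Tendsto (fun t => f t - C * E t) atTop (𝓝 (0 - C * 0)) :=
      hlim.sub (hElim.const_mul C)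
    simpa [hw_def] using this
  -- main claim: w ≤ 0 on [0, ∞)
  suffices hmain : ∀ t : ℝ, 0 ≤ t → w t ≤ 0 by
    intro t ht
    have := hmain t ht
    simp only [hw_def] at this
    linarith
  by_contra hcon
  push_neg at hcon
  obtain ⟨t₁, ht₁0, ht₁⟩ := hcon
  have ht₁T : T < t₁ := by
    by_contra h
    push_neg at h
    exact absurd (hwT t₁ ht₁0 h) (by linarith)
  -- find the max of w on [T, ∞)
  obtain ⟨K, hK⟩ := (eventually_atTop.mp (hwlim.eventually_lt_const ht₁))
  set K' : ℝ := max K t₁ with hK'_def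
  have hTK' : T ≤ K' := le_trans ht₁T.le (le_max_right _ _)
  have hwc : Continuous w := hwcont2.continuous
  obtain ⟨t₀, ht₀mem, ht₀max⟩ := (isCompact_Icc (a := T) (b := K')).exists_isMaxOn
    (nonempty_Icc.mpr hTK') hwc.continuousOn
  have ht₁mem : t₁ ∈ Icc T K' := ⟨ht₁T.le, le_max_right _ _⟩
  have ht₁t₀ : w t₁ ≤ w t₀ := ht₀max ht₁mem
  have hwt₀pos : 0 < w t₀ := lt_of_lt_of_le ht₁ ht₁t₀
  have ht₀T : T < t₀ := by
    rcases lt_or_eq_of_le ht₀mem.1 with h | h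
    · exact h
    · exfalso; have := hwT t₀ (h ▸ hT0) (h ▸ le_rfl); linarith
  have ht₀0 : 0 ≤ t₀ := le_trans hT0 ht₀T.le
  -- t₀ is a local max of w on ℝ
  have hlocmax : IsLocalMax w t₀ := by
    filter_upwards [Ioi_mem_nhds ht₀T] with s hs
    rcases le_total s K' with h | h
    · exact ht₀max ⟨le_of_lt hs, h⟩
    · have h1 : w s < w t₁ := hK s (le_trans (le_max_left _ _) h)
      show w s ≤ w t₀
      linarith
  have hdd0 : deriv (deriv w) t₀ ≤ 0 := secondDeriv_nonpos_of_isLocalMax' hwcont2 hlocmax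
  -- lower bound on f'' from the ODE
  have hode' := hode t₀ ht₀0
  obtain ⟨hf0, hf1⟩ := hrange t₀ ht₀0
  have hfdd : ((t₀ + α) ^ 2 - 1) * f t₀ ≤ deriv (deriv f) t₀ := by
    have hb' : 1 / b ≤ 1 := by
      rw [div_le_one (by linarith)]; exact hb
    have h1 : 0 ≤ 1 - (f t₀)^2 := by nlinarith
    have h2 : 1 / b * (1 - (f t₀)^2) ≤ 1 := by
      have h3 := mul_le_mul_of_nonneg_right hb' h1
      nlinarith
    have hrhs : 1 / b * (1 - (f t₀) ^ 2) * f t₀ ≤ f t₀ := by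
      calc 1 / b * (1 - (f t₀)^2) * f t₀ ≤ 1 * f t₀ :=
            mul_le_mul_of_nonneg_right h2 hf0
        _ = f t₀ := one_mul _
    linarith
  -- contradiction
  have h1 : 1 < t₀ + α := by
    have : 1 - α ≤ T := le_max_right _ _
    linarith
  have hsq : 1 < (t₀ + α) ^ 2 := by nlinarith
  have hwval : w t₀ = f t₀ - C * E t₀ := rfl
  have key : ((t₀ + α) ^ 2 - 1) * w t₀ ≤ deriv (deriv w) t₀ := by
    rw [hwdd t₀, hwval]
    nlinarith [hfdd]
  have hposprod : 0 < ((t₀ + α) ^ 2 - 1) * w t₀ :=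
    mul_pos (by linarith) hwt₀pos
  linarith
end
end
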